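/- Let n ≥ 3, 1 ≤ q ≤ n−1, 1 ≤ ℓ ≤ min{q, n−q}, and let A be a self-adjoint endomorphism of an n-dimensional inner product space whose q smallest eigenvalues sum to a nonnegative number, with normalized trace H = (tr A)/n. Then every eigenvalue λ of T_A^{[ℓ]} = (tr A)A^{[ℓ]} − A^{[ℓ]}∘A^{[ℓ]} satisfies λ ≥ −ℓ(n−ℓ) · ((q−ℓ)/ℓ) · (n/(n−q))² · H². -/

import Mathlib

open Finset

lemma aux_le_strictMono {l n : ℕ} (f : Fin l → Fin n) (hf : StrictMono f) :
    ∀ m (h : m < l), m ≤ (f ⟨m, h⟩ : ℕ) := by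
  intro m
  induction m with
  | zero => intro h; exact Nat.zero_le _
  | succ m ih =>
    intro h
    have h' : m < l := Nat.lt_of_succ_lt h
    have h1 := ih h'
    have h2 : f ⟨m, h'⟩ < f ⟨m + 1, h⟩ := hf (by simp [Fin.lt_def])
    have := Fin.lt_def.mp h2
    omega

lemma aux_filter_card {n a b : ℕ} (hb : b ≤ n) :
    ((univ : Finset (Fin n)).filter fun i : Fin n => a ≤ (i : ℕ) ∧ (i : ℕ) < b).card = b - a := by
  have h : ∀ m ∈ Finset.Ico a b, m < n := fun m hm => lt_of_lt_of_le (mem_Ico.mp hm).2 hb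
  have : ((univ : Finset (Fin n)).filter fun i : Fin n => a ≤ (i : ℕ) ∧ (i : ℕ) < b)
      = (Finset.Ico a b).attachFin h := by
    ext i; simp [Finset.mem_attachFin, mem_Ico]
  rw [this, Finset.card_attachFin, Nat.card_Ico]

lemma aux_filter_card' {n b : ℕ} (hb : b ≤ n) :
    ((univ : Finset (Fin n)).filter fun i : Fin n => (i : ℕ) < b).card = b := by
  have : ((univ : Finset (Fin n)).filter fun i : Fin n => (i : ℕ) < b)
      = ((univ : Finset (Fin n)).filter fun i : Fin n => 0 ≤ (i : ℕ) ∧ (i : ℕ) < b) := by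
    ext i; simp
  rw [this, aux_filter_card hb, Nat.sub_zero]

lemma aux_sum_split {n a b : ℕ} (hab : a ≤ b) (k : Fin n → ℝ) :
    ∑ i ∈ (univ : Finset (Fin n)).filter (fun i : Fin n => (i : ℕ) < b), k i
      = (∑ i ∈ (univ : Finset (Fin n)).filter (fun i : Fin n => (i : ℕ) < a), k i)
        + ∑ i ∈ (univ : Finset (Fin n)).filter (fun i : Fin n => a ≤ (i : ℕ) ∧ (i : ℕ) < b), k i := by
  have h := Finset.sum_filter_add_sum_filter_not
    ((univ : Finset (Fin n)).filter (fun i : Fin n => (i : ℕ) < b)) (fun i => (i : ℕ) < a) k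
  rw [Finset.filter_filter, Finset.filter_filter] at h
  rw [← h]
  congr 1
  · apply Finset.sum_congr _ (fun _ _ => rfl)
    ext i; simp only [mem_filter, mem_univ, true_and]; omega
  · apply Finset.sum_congr _ (fun _ _ => rfl)
    ext i; simp only [mem_filter, mem_univ, true_and]; omega

lemma aux_sum_smallest {n l : ℕ} (hln : l ≤ n) (k : Fin n → ℝ) (hk : Monotone k)
    (s : Finset (Fin n)) (hs : s.card = l) :
    ∑ i ∈ (univ : Finset (Fin n)).filter (fun i : Fin n => (i : ℕ) < l), k i ≤ ∑ j ∈ s, k j := by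
  have hmap : s = univ.map (s.orderEmbOfFin hs).toEmbedding := by
    ext j
    constructor
    · intro hj
      have : j ∈ Set.range (s.orderEmbOfFin hs) := by
        rw [Finset.range_orderEmbOfFin s hs]; exact hj
      obtain ⟨i, hi⟩ := this
      exact Finset.mem_map.mpr ⟨i, Finset.mem_univ i, hi⟩
    · intro hj
      obtain ⟨i, _, hi⟩ := Finset.mem_map.mp hj
      exact hi ▸ s.orderEmbOfFin_mem hs i
  have hfil : ((univ : Finset (Fin n)).filter fun i : Fin n => (i : ℕ) < l)
      = univ.map (Fin.castLEEmb hln) := by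
    ext j
    simp only [mem_filter, mem_univ, true_and, Finset.mem_map, RelEmbedding.coe_toEmbedding]
    constructor
    · intro hj
      exact ⟨⟨(j : ℕ), hj⟩, by ext; simp⟩
    · rintro ⟨i, rfl⟩
      simpa using i.2
  rw [hmap, hfil, Finset.sum_map, Finset.sum_map]
  apply Finset.sum_le_sum
  intro i _
  apply hk
  rw [Fin.le_def]
  simp only [RelEmbedding.coe_toEmbedding, Fin.castLEEmb_apply, Fin.coe_castLE]
  have := aux_le_strictMono (s.orderEmbOfFin hs) (s.orderEmbOfFin hs).strictMono (i : ℕ) i.2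
  simpa using this


set_option maxHeartbeats 1000000 in

/-- algebraic core of Proposition `propb`: let `n ≥ 3`,
`1 ≤ q ≤ n - 1`, `1 ≤ ℓ ≤ min {q, n - q}`, and let `A` be a self-adjoint
endomorphism of an `n`-dimensional real inner product space whose `q` smallest
eigenvalues sum to a nonnegative number, with normalized trace `H = (tr A)/n`.
Then every eigenvalue `lam` of `T_A^{[ℓ]} = (tr A) • A^{[ℓ]} - A^{[ℓ]} ∘ A^{[ℓ]}`
(acting on alternating `ℓ`-forms) satisfies
`lam ≥ -ℓ(n-ℓ) ((q-ℓ)/ℓ) (n/(n-q))² H²`. -/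
theorem stmt12 {V : Type*} [NormedAddCommGroup V] [InnerProductSpace ℝ V]
    (n q ℓ : ℕ) (hn : 3 ≤ n) (hq1 : 1 ≤ q) (hqn : q + 1 ≤ n)
    (hl1 : 1 ≤ ℓ) (hlq : ℓ ≤ q) (hlnq : ℓ + q ≤ n)
    (A : V →ₗ[ℝ] V) (hA : A.IsSymmetric)
    (e : OrthonormalBasis (Fin n) ℝ V) (k : Fin n → ℝ) (hk : Monotone k)
    (heig : ∀ i, A (e i) = k i • e i)
    (hqnonneg : 0 ≤ ∑ i ∈ Finset.univ.filter (fun i : Fin n => (i : ℕ) < q), k i)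
    (H : ℝ) (hH : H = (∑ i : Fin n, k i) / n)
    (Ap : AlternatingMap ℝ V ℝ (Fin ℓ) →ₗ[ℝ] AlternatingMap ℝ V ℝ (Fin ℓ))
    (hAp : ∀ (ω : AlternatingMap ℝ V ℝ (Fin ℓ)) (v : Fin ℓ → V),
      Ap ω v = ∑ i : Fin ℓ, ω (Function.update v i (A (v i))))
    (lam : ℝ) (ω : AlternatingMap ℝ V ℝ (Fin ℓ)) (hω : ω ≠ 0)
    (heigen : ((∑ i : Fin n, k i) • Ap - Ap ∘ₗ Ap) ω = lam • ω) :
    lam ≥ -((ℓ : ℝ) * ((n : ℝ) - ℓ) * (((q : ℝ) - ℓ) / ℓ) *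
      ((n : ℝ) / ((n : ℝ) - q)) ^ 2 * H ^ 2) := by
  classical
  set σ : ℝ := ∑ i : Fin n, k i with hσdef
  -- find a basis tuple where ω does not vanish
  have hexists : ∃ v : Fin ℓ → Fin n, Function.Injective v ∧ ω (fun i => e (v i)) ≠ 0 := by
    by_contra hcon
    push_neg at hcon
    apply hω
    apply Module.Basis.ext_alternating e.toBasis
    intro v hv
    simp only [OrthonormalBasis.coe_toBasis, AlternatingMap.zero_apply]
    exact hcon v hv
  obtain ⟨v, hvinj, hvne⟩ := hexists
  set K : ℝ := ∑ i : Fin ℓ, k (v i) with hKdef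
  -- Ap acts on basis tuples by multiplication by K
  have step : ∀ η : AlternatingMap ℝ V ℝ (Fin ℓ),
      Ap η (fun i => e (v i)) = K * η (fun i => e (v i)) := by
    intro η
    rw [hAp]
    have hterm : ∀ i : Fin ℓ,
        η (Function.update (fun j => e (v j)) i (A (e (v i))))
          = k (v i) * η (fun j => e (v j)) := by
      intro i
      rw [heig]
      have h1 := η.map_update_smul (v := fun j => e (v j)) i (k (v i)) (e (v i))
      rw [h1, Function.update_eq_self]
      simp
    rw [Finset.sum_congr rfl (fun i _ => hterm i), ← Finset.sum_mul]
  -- eigenvalue identity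
  have hev : lam = σ * K - K * K := by
    have h0 := congrArg
      (fun (η : AlternatingMap ℝ V ℝ (Fin ℓ)) => η (fun i => e (v i))) heigen
    simp only [LinearMap.sub_apply, LinearMap.smul_apply, LinearMap.comp_apply,
      AlternatingMap.sub_apply, AlternatingMap.smul_apply, smul_eq_mul] at h0
    rw [step ω, step (Ap ω), step ω] at h0
    have h1 : (σ * K - K * K - lam) * ω (fun i => e (v i)) = 0 := by
      rw [sub_mul, sub_mul]
      rw [← h0]
      ring
    rcases mul_eq_zero.mp h1 with h2 | h2
    · linarith
    · exact absurd h2 hvne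
  -- basic spectral bounds
  set Sq : ℝ := ∑ i ∈ Finset.univ.filter (fun i : Fin n => (i : ℕ) < q), k i with hSqdef
  have hq1n : q - 1 < n := by omega
  have hkq1 : 0 ≤ k ⟨q - 1, hq1n⟩ := by
    have hub : ∀ j ∈ Finset.univ.filter (fun i : Fin n => (i : ℕ) < q),
        k j ≤ k ⟨q - 1, hq1n⟩ := by
      intro j hj
      simp only [mem_filter, mem_univ, true_and] at hj
      exact hk (by rw [Fin.le_def]; simp; omega)
    have h2 := Finset.sum_le_card_nsmul _ _ _ hub
    rw [aux_filter_card' (by omega)] at h2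
    have h3 : Sq ≤ (q : ℝ) * k ⟨q - 1, hq1n⟩ := by
      rw [hSqdef]; simpa [nsmul_eq_mul] using h2
    nlinarith [hqnonneg, h3, (by positivity : (0:ℝ) < (q:ℝ))]
  have hk0 : ∀ i : Fin n, q - 1 ≤ (i : ℕ) → 0 ≤ k i := by
    intro i hi
    exact le_trans hkq1 (hk (by rw [Fin.le_def]; simpa using hi))
  -- split the trace
  have hsplit := Finset.sum_filter_add_sum_filter_not
    (univ : Finset (Fin n)) (fun i : Fin n => (i : ℕ) < q) k
  have htail : 0 ≤ ∑ i ∈ Finset.univ.filter (fun i : Fin n => ¬ (i : ℕ) < q), k i := by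
    apply Finset.sum_nonneg
    intro i hi
    simp only [mem_filter, mem_univ, true_and, not_lt] at hi
    exact hk0 i (by omega)
  have hσ0 : 0 ≤ σ := by rw [hσdef, ← hsplit]; exact add_nonneg hqnonneg htail
  -- each of the q smallest eigenvalues is at most σ/(n-q)
  have hkub : ∀ j : Fin n, (j : ℕ) < q → ((n : ℝ) - q) * k j ≤ σ := by
    intro j hj
    have hcard : (Finset.univ.filter (fun i : Fin n => ¬ (i : ℕ) < q)).card = n - q := by
      have : (Finset.univ.filter (fun i : Fin n => ¬ (i : ℕ) < q))
          = (Finset.univ.filter (fun i : Fin n => q ≤ (i : ℕ) ∧ (i : ℕ) < n)) := by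
        ext i; simp only [mem_filter, mem_univ, true_and, not_lt]
        exact ⟨fun h => ⟨h, i.2⟩, fun h => h.1⟩
      rw [this, aux_filter_card (le_refl n)]
    have hlb : ∀ i ∈ Finset.univ.filter (fun i : Fin n => ¬ (i : ℕ) < q), k j ≤ k i := by
      intro i hi
      simp only [mem_filter, mem_univ, true_and, not_lt] at hi
      exact hk (by rw [Fin.le_def]; omega)
    have h2 := Finset.card_nsmul_le_sum _ _ _ hlb
    rw [hcard] at h2
    have h3 : ((n : ℝ) - q) * k j
        ≤ ∑ i ∈ Finset.univ.filter (fun i : Fin n => ¬ (i : ℕ) < q), k i := by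
      have : ((n - q : ℕ) : ℝ) = (n : ℝ) - q := by
        rw [Nat.cast_sub (by omega)]
      rw [← this]
      simpa [nsmul_eq_mul] using h2
    calc ((n : ℝ) - q) * k j ≤ _ := h3
      _ ≤ σ := by rw [hσdef, ← hsplit]; linarith [hqnonneg]
  -- lower bound on K
  have hKlow : -((q : ℝ) - ℓ) * σ ≤ ((n : ℝ) - q) * K := by
    -- K ≥ sum of ℓ smallest
    have hsℓ : (Finset.image v Finset.univ).card = ℓ := by
      rw [Finset.card_image_of_injective _ hvinj, Finset.card_univ, Fintype.card_fin]
    have hKs : K = ∑ j ∈ Finset.image v Finset.univ, k j := by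
      rw [hKdef, Finset.sum_image (fun a _ b _ h => hvinj h)]
    have h1 : ∑ i ∈ (univ : Finset (Fin n)).filter (fun i : Fin n => (i : ℕ) < ℓ), k i ≤ K := by
      rw [hKs]
      exact aux_sum_smallest (by omega) k hk _ hsℓ
    -- S_ℓ bound
    have h2 := aux_sum_split (n := n) hlq k
    have hmidub : ∑ j ∈ (univ : Finset (Fin n)).filter
        (fun i : Fin n => ℓ ≤ (i : ℕ) ∧ (i : ℕ) < q), (((n : ℝ) - q) * k j)
        ≤ ((q : ℝ) - ℓ) * σ := by
      have hcard := aux_filter_card (n := n) (a := ℓ) (b := q) (by omega)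
      have h3 := Finset.sum_le_card_nsmul
        ((univ : Finset (Fin n)).filter (fun i : Fin n => ℓ ≤ (i : ℕ) ∧ (i : ℕ) < q))
        (fun j => ((n : ℝ) - q) * k j) σ
        (fun j hj => hkub j (by simp only [mem_filter, mem_univ, true_and] at hj; exact hj.2))
      rw [hcard] at h3
      have hcast : ((q - ℓ : ℕ) : ℝ) = (q : ℝ) - ℓ := Nat.cast_sub (by exact_mod_cast hlq)
      calc _ ≤ (q - ℓ : ℕ) • σ := h3
        _ = ((q : ℝ) - ℓ) * σ := by rw [nsmul_eq_mul, hcast]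
    have hnq0 : (0 : ℝ) ≤ (n : ℝ) - q := by
      have : (q : ℝ) + 1 ≤ n := by exact_mod_cast hqn
      linarith
    have hKge : ((n : ℝ) - q) * K
        ≥ ((n : ℝ) - q) * ∑ i ∈ (univ : Finset (Fin n)).filter
            (fun i : Fin n => (i : ℕ) < ℓ), k i :=
      mul_le_mul_of_nonneg_left h1 hnq0
    have hSq0 : 0 ≤ ((n : ℝ) - q) * Sq := mul_nonneg hnq0 hqnonneg
    have hmid : ((n : ℝ) - q) * ∑ i ∈ (univ : Finset (Fin n)).filter
          (fun i : Fin n => (i : ℕ) < ℓ), k i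
        = ((n : ℝ) - q) * Sq - ∑ j ∈ (univ : Finset (Fin n)).filter
            (fun i : Fin n => ℓ ≤ (i : ℕ) ∧ (i : ℕ) < q), (((n : ℝ) - q) * k j) := by
      rw [← Finset.mul_sum, hSqdef, h2]; ring
    rw [hmid] at hKge
    linarith
  -- upper bound on K
  have hKup : K ≤ σ := by
    set s : Finset (Fin n) := Finset.image v Finset.univ with hs
    have hsℓ : s.card = ℓ := by
      rw [hs, Finset.card_image_of_injective _ hvinj, Finset.card_univ, Fintype.card_fin]
    have hKs : K = ∑ j ∈ s, k j := by
      rw [hKdef, hs, Finset.sum_image (fun a _ b _ h => hvinj h)]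
    have hcompl : s.card + sᶜ.card = n := by
      rw [Finset.card_add_card_compl, Fintype.card_fin]
    have hscc : sᶜ.card = n - ℓ := by omega
    have h1 : ∑ i ∈ (univ : Finset (Fin n)).filter
        (fun i : Fin n => (i : ℕ) < n - ℓ), k i ≤ ∑ j ∈ sᶜ, k j :=
      aux_sum_smallest (by omega) k hk _ hscc
    have h2 := aux_sum_split (n := n) (a := q) (b := n - ℓ) (by omega) k
    have hmid0 : 0 ≤ ∑ i ∈ (univ : Finset (Fin n)).filter
        (fun i : Fin n => q ≤ (i : ℕ) ∧ (i : ℕ) < n - ℓ), k i := by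
      apply Finset.sum_nonneg
      intro i hi
      simp only [mem_filter, mem_univ, true_and] at hi
      exact hk0 i (by omega)
    have h3 : 0 ≤ ∑ j ∈ sᶜ, k j := by
      refine le_trans ?_ h1
      rw [h2]
      exact add_nonneg hqnonneg hmid0
    have h4 : K + ∑ j ∈ sᶜ, k j = σ := by
      rw [hKs, hσdef, Finset.sum_add_sum_compl]
    linarith
  -- final algebra
  have hnq0 : (0 : ℝ) < (n : ℝ) - q := by
    have : (q : ℝ) + 1 ≤ n := by exact_mod_cast hqn
    linarith
  have hl0 : (0 : ℝ) < ℓ := by exact_mod_cast hl1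
  have hn0 : (0 : ℝ) < n := by positivity
  have hrhs : -((ℓ : ℝ) * ((n : ℝ) - ℓ) * (((q : ℝ) - ℓ) / ℓ) *
      ((n : ℝ) / ((n : ℝ) - q)) ^ 2 * H ^ 2)
      = -(((q : ℝ) - ℓ) * ((n : ℝ) - ℓ) * σ ^ 2) / ((n : ℝ) - q) ^ 2 := by
    rw [hH, hσdef]
    field_simp
  have hql : (0 : ℝ) ≤ (q : ℝ) - ℓ := by
    have : (ℓ : ℝ) ≤ q := by exact_mod_cast hlq
    linarith
  rw [hrhs, hev, ge_iff_le, div_le_iff₀ (by positivity)]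
  nlinarith [mul_nonneg (by linarith : (0:ℝ) ≤ ((n : ℝ) - q) * K + ((q : ℝ) - ℓ) * σ)
    (by nlinarith [mul_nonneg hnq0.le (sub_nonneg.mpr hKup), mul_nonneg hql hσ0] :
      (0:ℝ) ≤ ((n : ℝ) - q) * (σ - K) + ((q : ℝ) - ℓ) * σ),
    sq_nonneg σ, hσ0]
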